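/- For every integer n ≥ 6, if F is a set of vertices of AN_n such that for every i ∈ {1,…,n} the number of vertices of F lying in the subnetwork AN_n^i is at most n − 3, then AN_n − F is connected. -/

import Mathlib

open SimpleGraph

/-- Vertices of the alternating group network: even permutations of `{1,…,n}`
(modeled as permutations of `Fin n` with sign `1`). A permutation `p` is viewed
as the sequence `p₁p₂⋯p_n` where `p_j` (the symbol in position `j`) is `p ⟨j-1,_⟩`. -/
abbrev ANVertex (n : ℕ) : Type := {p : Equiv.Perm (Fin n) // Equiv.Perm.sign p = 1}

/-- The adjacency relation of the `n`-dimensional alternating group network `AN_n`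
(positions are 1-based in the informal description; position `j` is `⟨j-1,_⟩ : Fin n`). -/
def ANAdj (n : ℕ) (p q : Equiv.Perm (Fin n)) : Prop :=
  ∃ hn : 3 ≤ n,
    ((p ⟨0, by omega⟩ = q ⟨1, by omega⟩ ∧ p ⟨1, by omega⟩ = q ⟨2, by omega⟩ ∧
      p ⟨2, by omega⟩ = q ⟨0, by omega⟩ ∧ ∀ j : Fin n, 3 ≤ (j : ℕ) → p j = q j) ∨
     (p ⟨0, by omega⟩ = q ⟨2, by omega⟩ ∧ p ⟨1, by omega⟩ = q ⟨0, by omega⟩ ∧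
      p ⟨2, by omega⟩ = q ⟨1, by omega⟩ ∧ ∀ j : Fin n, 3 ≤ (j : ℕ) → p j = q j) ∨
     (∃ i : Fin n, 3 ≤ (i : ℕ) ∧ p ⟨0, by omega⟩ = q ⟨1, by omega⟩ ∧
      p ⟨1, by omega⟩ = q ⟨0, by omega⟩ ∧ p ⟨2, by omega⟩ = q i ∧ p i = q ⟨2, by omega⟩ ∧
      ∀ j : Fin n, 3 ≤ (j : ℕ) → j ≠ i → p j = q j))

/-- The `n`-dimensional alternating group network `AN_n`. -/
def AN (n : ℕ) : SimpleGraph (ANVertex n) where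
  Adj x y := ANAdj n x.1 y.1
  symm := by
    constructor
    rintro x y ⟨hn, h⟩
    refine ⟨hn, ?_⟩
    rcases h with ⟨h1, h2, h3, h4⟩ | ⟨h1, h2, h3, h4⟩ | ⟨i, hi, h1, h2, h3, h4, h5⟩
    · exact Or.inr (Or.inl ⟨h3.symm, h1.symm, h2.symm, fun j hj => (h4 j hj).symm⟩)
    · exact Or.inl ⟨h2.symm, h3.symm, h1.symm, fun j hj => (h4 j hj).symm⟩
    · exact Or.inr (Or.inr ⟨i, hi, h2.symm, h1.symm, h4.symm, h3.symm,
        fun j hj hji => (h5 j hj hji).symm⟩)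
  loopless := by
    constructor
    rintro x ⟨hn, ⟨h1, -⟩ | ⟨h1, -⟩ | ⟨i, hi, h1, -⟩⟩ <;>
      simpa [Fin.ext_iff] using x.1.injective h1

/-- The `ℓ`-component connectivity `κ_ℓ(G)`: the minimum number of vertices whose
removal from `G` results in a graph with at least `ℓ` connected components or a
graph with fewer than `ℓ` vertices. -/
noncomputable def componentConnectivity {V : Type*} [Fintype V] (G : SimpleGraph V)
    (l : ℕ) : ℕ :=
  sInf {k | ∃ F : Finset V, F.card = k ∧
    (l ≤ Nat.card ((G.induce (↑F : Set V)ᶜ).ConnectedComponent) ∨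
     Fintype.card V - F.card < l)}


open Equiv Equiv.Perm Finset

section AuxAN
variable {n : ℕ}

/-- vertices whose symbols at positions `≥ m` are prescribed by `s`. -/
def blockSet (n m : ℕ) (s : Fin n → Fin n) : Set (ANVertex n) :=
  {p | ∀ j : Fin n, m ≤ (j : ℕ) → p.1 j = s j}

lemma reach_mono {V : Type*} {G : SimpleGraph V} {S T : Set V} (hST : S ⊆ T) {u v : V}
    (hu : u ∈ S) (hv : v ∈ S) (h : (G.induce S).Reachable ⟨u, hu⟩ ⟨v, hv⟩) :
    (G.induce T).Reachable ⟨u, hST hu⟩ ⟨v, hST hv⟩ :=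
  h.map (G.induceHomOfLE hST).toHom

/-- the permutation `(position 0, position 1)(position 2, position i)`. -/


def crossPerm (h3 : 3 ≤ n) (i : Fin n) : Equiv.Perm (Fin n) :=
  Equiv.swap ⟨0, by omega⟩ ⟨1, by omega⟩ * Equiv.swap ⟨2, by omega⟩ i

lemma crossPerm_apply (h3 : 3 ≤ n) (i : Fin n) (hi : 3 ≤ (i : ℕ)) (x : Fin n) :
    crossPerm h3 i x =
      if x = ⟨0, by omega⟩ then ⟨1, by omega⟩ else if x = ⟨1, by omega⟩ then ⟨0, by omega⟩
      else if x = ⟨2, by omega⟩ then i else if x = i then ⟨2, by omega⟩ else x := by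
  simp only [crossPerm, Equiv.Perm.mul_apply, Equiv.swap_apply_def]
  split_ifs <;> simp_all [Fin.ext_iff] <;> omega

lemma sign_crossPerm (h3 : 3 ≤ n) (i : Fin n) (hi : 3 ≤ (i : ℕ)) :
    Equiv.Perm.sign (crossPerm h3 i) = 1 := by
  rw [crossPerm, map_mul, Equiv.Perm.sign_swap, Equiv.Perm.sign_swap] <;>
    simp [Fin.ext_iff] <;> omega

/-- the unique "cross neighbour" of `p` along dimension `i`. -/
def crossV (h3 : 3 ≤ n) (i : Fin n) (hi : 3 ≤ (i : ℕ)) (p : ANVertex n) : ANVertex n :=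
  ⟨p.1 * crossPerm h3 i, by rw [map_mul, p.2, sign_crossPerm h3 i hi, one_mul]⟩

lemma crossV_apply (h3 : 3 ≤ n) (i : Fin n) (hi : 3 ≤ (i : ℕ)) (p : ANVertex n) (x : Fin n) :
    (crossV h3 i hi p).1 x = p.1 (crossPerm h3 i x) := rfl

lemma crossV_apply0 (h3 : 3 ≤ n) (i : Fin n) (hi : 3 ≤ (i : ℕ)) (p : ANVertex n) :
    (crossV h3 i hi p).1 ⟨0, by omega⟩ = p.1 ⟨1, by omega⟩ := by
  rw [crossV_apply, crossPerm_apply h3 i hi]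
  simp [Fin.ext_iff]

lemma crossV_apply1 (h3 : 3 ≤ n) (i : Fin n) (hi : 3 ≤ (i : ℕ)) (p : ANVertex n) :
    (crossV h3 i hi p).1 ⟨1, by omega⟩ = p.1 ⟨0, by omega⟩ := by
  rw [crossV_apply, crossPerm_apply h3 i hi]
  simp [Fin.ext_iff]

lemma crossV_apply2 (h3 : 3 ≤ n) (i : Fin n) (hi : 3 ≤ (i : ℕ)) (p : ANVertex n) :
    (crossV h3 i hi p).1 ⟨2, by omega⟩ = p.1 i := by
  rw [crossV_apply, crossPerm_apply h3 i hi]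
  simp [Fin.ext_iff]

lemma crossV_applyi (h3 : 3 ≤ n) (i : Fin n) (hi : 3 ≤ (i : ℕ)) (p : ANVertex n) :
    (crossV h3 i hi p).1 i = p.1 ⟨2, by omega⟩ := by
  rw [crossV_apply, crossPerm_apply h3 i hi]
  have h0 : i ≠ ⟨0, by omega⟩ := by simp [Fin.ext_iff]; omega
  have h1 : i ≠ ⟨1, by omega⟩ := by simp [Fin.ext_iff]; omega
  have h2 : i ≠ ⟨2, by omega⟩ := by simp [Fin.ext_iff]; omega
  simp [h0, h1, h2]

lemma crossV_apply_other (h3 : 3 ≤ n) (i : Fin n) (hi : 3 ≤ (i : ℕ)) (p : ANVertex n)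
    (x : Fin n) (hx3 : 3 ≤ (x : ℕ)) (hxi : x ≠ i) :
    (crossV h3 i hi p).1 x = p.1 x := by
  rw [crossV_apply, crossPerm_apply h3 i hi]
  have h0 : x ≠ ⟨0, by omega⟩ := by simp [Fin.ext_iff]; omega
  have h1 : x ≠ ⟨1, by omega⟩ := by simp [Fin.ext_iff]; omega
  have h2 : x ≠ ⟨2, by omega⟩ := by simp [Fin.ext_iff]; omega
  simp [h0, h1, h2, hxi]

lemma adj_crossV (h3 : 3 ≤ n) (i : Fin n) (hi : 3 ≤ (i : ℕ)) (p : ANVertex n) :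
    ANAdj n p.1 (crossV h3 i hi p).1 := by
  refine ⟨h3, Or.inr (Or.inr ⟨i, hi, ?_, ?_, ?_, ?_, ?_⟩)⟩
  · rw [crossV_apply1]
  · rw [crossV_apply0]
  · rw [crossV_applyi]
  · rw [crossV_apply2]
  · intro j hj hji
    rw [crossV_apply_other h3 i hi p j hj hji]

lemma crossV_ne (h3 : 3 ≤ n) (i : Fin n) (hi : 3 ≤ (i : ℕ)) (p : ANVertex n) :
    crossV h3 i hi p ≠ p := by
  intro h
  have := congrArg (fun q : ANVertex n => q.1 ⟨0, by omega⟩) h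
  simp only [crossV_apply0] at this
  have := p.1.injective this
  simp [Fin.ext_iff] at this

lemma crossV_injective (h3 : 3 ≤ n) (i : Fin n) (hi : 3 ≤ (i : ℕ)) :
    Function.Injective (crossV h3 i hi) := by
  intro p q h
  have : p.1 * crossPerm h3 i = q.1 * crossPerm h3 i := congrArg Subtype.val h
  exact Subtype.ext (mul_right_cancel this)


lemma adj_of_block3 (h3 : 3 ≤ n) {s : Fin n → Fin n} {u v : ANVertex n}
    (hu : u ∈ blockSet n 3 s) (hv : v ∈ blockSet n 3 s) (huv : u ≠ v) :
    ANAdj n u.1 v.1 := by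
  classical
  set τ : Equiv.Perm (Fin n) := u.1⁻¹ * v.1 with hτdef
  have hτ : ∀ x, v.1 x = u.1 (τ x) := by
    intro x
    simp [hτdef, Equiv.Perm.mul_apply]
  have hsign : Equiv.Perm.sign τ = 1 := by
    simp [hτdef, map_mul, u.2, v.2]
  have hfix : ∀ x : Fin n, 3 ≤ (x : ℕ) → τ x = x := by
    intro x hx
    apply u.1.injective
    rw [← hτ x, hu x hx, hv x hx]
  have hlow : ∀ x : Fin n, (x : ℕ) < 3 → ((τ x : Fin n) : ℕ) < 3 := by
    intro x hx
    by_contra h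
    push_neg at h
    have := hfix (τ x) h
    have := τ.injective this
    omega
  -- if τ = 1 then u = v
  have hne : τ ≠ 1 := by
    intro h
    apply huv
    apply Subtype.ext; apply Equiv.ext; intro x
    have := hτ x
    rw [h] at this
    simp at this
    exact this.symm
  -- characterize τ on small indices
  have h0n : (0:ℕ) < n := by omega
  have h1n : (1:ℕ) < n := by omega
  have h2n : (2:ℕ) < n := by omega
  set e0 : Fin n := ⟨0, h0n⟩
  set e1 : Fin n := ⟨1, h1n⟩
  set e2 : Fin n := ⟨2, h2n⟩
  have ha := hlow e0 (by simp [e0])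
  have hb := hlow e1 (by simp [e1])
  have hc := hlow e2 (by simp [e2])
  have hab : τ e0 ≠ τ e1 := fun h => by simpa [e0, e1, Fin.ext_iff] using τ.injective h
  have hac : τ e0 ≠ τ e2 := fun h => by simpa [e0, e2, Fin.ext_iff] using τ.injective h
  have hbc : τ e1 ≠ τ e2 := fun h => by simpa [e1, e2, Fin.ext_iff] using τ.injective h
  -- helper to prove τ equals an explicit perm from its values
  have hperm_eq : ∀ (a b c : Fin n), τ e0 = a → τ e1 = b → τ e2 = c →
      ∀ (σ : Equiv.Perm (Fin n)), σ e0 = a → σ e1 = b → σ e2 = c →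
      (∀ x : Fin n, 3 ≤ (x:ℕ) → σ x = x) → τ = σ := by
    intro a b c h1 h2 h3' σ g1 g2 g3 gfix
    apply Equiv.ext; intro x
    rcases lt_or_ge (x : ℕ) 3 with hx | hx
    · interval_cases h : (x : ℕ)
      · have : x = e0 := by simp [e0, Fin.ext_iff, h]
        rw [this, h1, g1]
      · have : x = e1 := by simp [e1, Fin.ext_iff, h]
        rw [this, h2, g2]
      · have : x = e2 := by simp [e2, Fin.ext_iff, h]
        rw [this, h3', g3]
    · rw [hfix x hx, gfix x hx]
  have swap_ne : ∀ (a b : Fin n), (a:ℕ) ≠ (b:ℕ) → a ≠ b := by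
    intro a b h hh; exact h (congrArg Fin.val hh)
  -- case analysis
  have hne01 : e0 ≠ e1 := by simp [e0, e1, Fin.ext_iff]
  have hne02 : e0 ≠ e2 := by simp [e0, e2, Fin.ext_iff]
  have hne12 : e1 ≠ e2 := by simp [e1, e2, Fin.ext_iff]
  have key : (τ e0 = e2 ∧ τ e1 = e0 ∧ τ e2 = e1) ∨ (τ e0 = e1 ∧ τ e1 = e2 ∧ τ e2 = e0) := by
    have tri : ∀ y : Fin n, (y : ℕ) < 3 → y = e0 ∨ y = e1 ∨ y = e2 := by
      intro y hy
      have : (y:ℕ) = 0 ∨ (y:ℕ) = 1 ∨ (y:ℕ) = 2 := by omega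
      rcases this with h | h | h
      · exact Or.inl (Fin.ext h)
      · exact Or.inr (Or.inl (Fin.ext h))
      · exact Or.inr (Or.inr (Fin.ext h))
    have va := tri _ ha
    have vb := tri _ hb
    have vc := tri _ hc
    rcases va with h1 | h1 | h1 <;> rcases vb with h2 | h2 | h2 <;> rcases vc with h3' | h3' | h3'
    all_goals first
      | exact Or.inl ⟨h1, h2, h3'⟩
      | exact Or.inr ⟨h1, h2, h3'⟩
      | exact absurd (h1.trans h2.symm) hab
      | exact absurd (h1.trans h3'.symm) hac
      | exact absurd (h2.trans h3'.symm) hbc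
      | skip
    -- remaining: identity and the three transpositions
    · exfalso; apply hne
      exact hperm_eq _ _ _ h1 h2 h3' 1 (by simp) (by simp) (by simp) (fun x _ => rfl)
    · exfalso
      have : τ = Equiv.swap e1 e2 := by
        refine hperm_eq _ _ _ h1 h2 h3' (Equiv.swap e1 e2) ?_ ?_ ?_ ?_
        · rw [Equiv.swap_apply_of_ne_of_ne hne01 hne02]
        · rw [Equiv.swap_apply_left]
        · rw [Equiv.swap_apply_right]
        · intro x hx
          refine Equiv.swap_apply_of_ne_of_ne ?_ ?_ <;>
            (apply swap_ne; simp [e1, e2]; omega)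
      rw [this, Equiv.Perm.sign_swap hne12] at hsign
      exact absurd hsign (by decide)
    · exfalso
      have : τ = Equiv.swap e0 e1 := by
        refine hperm_eq _ _ _ h1 h2 h3' (Equiv.swap e0 e1) ?_ ?_ ?_ ?_
        · rw [Equiv.swap_apply_left]
        · rw [Equiv.swap_apply_right]
        · rw [Equiv.swap_apply_of_ne_of_ne hne02.symm hne12.symm]
        · intro x hx
          refine Equiv.swap_apply_of_ne_of_ne ?_ ?_ <;>
            (apply swap_ne; simp [e0, e1]; omega)
      rw [this, Equiv.Perm.sign_swap hne01] at hsign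
      exact absurd hsign (by decide)
    · exfalso
      have : τ = Equiv.swap e0 e2 := by
        refine hperm_eq _ _ _ h1 h2 h3' (Equiv.swap e0 e2) ?_ ?_ ?_ ?_
        · rw [Equiv.swap_apply_left]
        · rw [Equiv.swap_apply_of_ne_of_ne hne01.symm hne12]
        · rw [Equiv.swap_apply_right]
        · intro x hx
          refine Equiv.swap_apply_of_ne_of_ne ?_ ?_ <;>
            (apply swap_ne; simp [e0, e2]; omega)
      rw [this, Equiv.Perm.sign_swap hne02] at hsign
      exact absurd hsign (by decide)
  -- conclude adjacency
  refine ⟨h3, ?_⟩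
  rcases key with ⟨h1, h2, h3'⟩ | ⟨h1, h2, h3'⟩
  · -- τ : e0 ↦ e2, e1 ↦ e0, e2 ↦ e1 : case (i)
    refine Or.inl ⟨?_, ?_, ?_, ?_⟩
    · rw [hτ e1, h2]
    · rw [hτ e2, h3']
    · rw [hτ e0, h1]
    · intro j hj; rw [hτ j, hfix j hj]
  · refine Or.inr (Or.inl ⟨?_, ?_, ?_, ?_⟩)
    · rw [hτ e2, h3']
    · rw [hτ e0, h1]
    · rw [hτ e1, h2]
    · intro j hj; rw [hτ j, hfix j hj]


lemma exists_extension (A : Finset (Fin n)) (d : Fin n → Fin n)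
    (hinj : ∀ j ∉ A, ∀ k ∉ A, d j = d k → j = k) :
    ∃ p : Equiv.Perm (Fin n), ∀ j ∉ A, p j = d j := by
  classical
  set C : Finset (Fin n) := Aᶜ with hC
  set V : Finset (Fin n) := C.image d with hV
  have hVC : V.card = C.card := by
    rw [hV]
    apply Finset.card_image_of_injOn
    intro x hx y hy hxy
    exact hinj x (by simpa [hC] using hx) y (by simpa [hC] using hy) hxy
  have hcard : A.card = Vᶜ.card := by
    have h1 := Finset.card_add_card_compl A
    have h2 := Finset.card_add_card_compl V
    have h3 : C.card = Aᶜ.card := rfl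
    omega
  set e : {x // x ∈ A} ≃ {x // x ∈ Vᶜ} := Finset.equivOfCardEq hcard with he
  set f : Fin n → Fin n := fun j => if h : j ∈ A then (e ⟨j, h⟩ : Fin n) else d j with hf
  have hfinj : Function.Injective f := by
    intro x y hxy
    by_cases hx : x ∈ A <;> by_cases hy : y ∈ A <;> simp only [hf, hx, hy, dif_pos, dif_neg,
      not_false_iff] at hxy
    · exact Subtype.mk_eq_mk.mp (e.injective (Subtype.ext hxy))
    · exfalso
      have h1 : (e ⟨x, hx⟩ : Fin n) ∈ Vᶜ := (e ⟨x, hx⟩).2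
      have h2 : d y ∈ V := by
        rw [hV]
        exact Finset.mem_image.mpr ⟨y, by simpa [hC] using hy, rfl⟩
      rw [hxy] at h1
      exact (Finset.mem_compl.mp h1) h2
    · exfalso
      have h1 : (e ⟨y, hy⟩ : Fin n) ∈ Vᶜ := (e ⟨y, hy⟩).2
      have h2 : d x ∈ V := by
        rw [hV]
        exact Finset.mem_image.mpr ⟨x, by simpa [hC] using hx, rfl⟩
      rw [← hxy] at h1
      exact (Finset.mem_compl.mp h1) h2
    · exact hinj x hx y hy hxy
  refine ⟨Equiv.ofBijective f ((Finite.injective_iff_bijective).mp hfinj), ?_⟩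
  intro j hj
  simp [Equiv.ofBijective, hf, hj]

lemma exists_even_extension (A : Finset (Fin n)) (d : Fin n → Fin n)
    {a b : Fin n} (ha : a ∈ A) (hb : b ∈ A) (hab : a ≠ b)
    (hinj : ∀ j ∉ A, ∀ k ∉ A, d j = d k → j = k) :
    ∃ p : Equiv.Perm (Fin n), Equiv.Perm.sign p = 1 ∧ ∀ j ∉ A, p j = d j := by
  obtain ⟨p, hp⟩ := exists_extension A d hinj
  rcases Int.units_eq_one_or (Equiv.Perm.sign p) with hs | hs
  · exact ⟨p, hs, hp⟩
  · refine ⟨p * Equiv.swap a b, ?_, ?_⟩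
    · rw [map_mul, hs, Equiv.Perm.sign_swap hab]; decide
    · intro j hj
      have hja : j ≠ a := fun h => hj (h ▸ ha)
      have hjb : j ≠ b := fun h => hj (h ▸ hb)
      rw [Equiv.Perm.mul_apply, Equiv.swap_apply_of_ne_of_ne hja hjb]
      exact hp j hj

lemma two_mul_card_even_extension (A : Finset (Fin n)) (d : Fin n → Fin n)
    (p₀ : Equiv.Perm (Fin n)) (hp₀ : ∀ j ∉ A, p₀ j = d j)
    {a b : Fin n} (ha : a ∈ A) (hb : b ∈ A) (hab : a ≠ b) :
    2 * (Finset.univ.filter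
        (fun p : Equiv.Perm (Fin n) => Equiv.Perm.sign p = 1 ∧ ∀ j ∉ A, p j = d j)).card
      = Nat.factorial A.card := by
  classical
  set S : Finset (Equiv.Perm (Fin n)) :=
    Finset.univ.filter (fun p => ∀ j ∉ A, p j = d j) with hS
  -- |S| = A.card !
  have hScard : S.card = Nat.factorial A.card := by
    have h1 : S.card = (Finset.univ.filter
        (fun τ : Equiv.Perm (Fin n) => ∀ j ∉ A, τ j = j)).card := by
      apply Finset.card_bij' (fun q _ => p₀⁻¹ * q) (fun τ _ => p₀ * τ)
      · intro q hq
        simp only [hS, Finset.mem_filter, Finset.mem_univ, true_and] at hq ⊢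
        intro j hj
        rw [Equiv.Perm.mul_apply, hq j hj, ← hp₀ j hj, Equiv.Perm.inv_def, Equiv.symm_apply_apply]
      · intro τ hτ
        simp only [Finset.mem_filter, Finset.mem_univ, true_and, hS] at hτ ⊢
        intro j hj
        rw [Equiv.Perm.mul_apply, hτ j hj, hp₀ j hj]
      · intro q _; group
      · intro τ _; group
    rw [h1]
    have h2 : (Finset.univ.filter (fun τ : Equiv.Perm (Fin n) => ∀ j ∉ A, τ j = j)).card
        = Fintype.card {τ : Equiv.Perm (Fin n) // ∀ j, ¬ j ∈ A → τ j = j} := by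
      rw [Fintype.card_subtype]
    rw [h2, ← Fintype.card_congr (Equiv.Perm.subtypeEquivSubtypePerm (fun j => j ∈ A)),
      Fintype.card_perm, Fintype.card_coe]
  -- even/odd halves are equal
  have hhalf : (S.filter (fun p => Equiv.Perm.sign p = 1)).card
      = (S.filter (fun p => ¬ Equiv.Perm.sign p = 1)).card := by
    apply Finset.card_bij' (fun q _ => q * Equiv.swap a b) (fun q _ => q * Equiv.swap a b)
    · intro q hq
      simp only [Finset.mem_filter, hS, Finset.mem_univ, true_and] at hq ⊢
      obtain ⟨⟨hq1, hq2⟩⟩ := And.intro hq trivial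
      constructor
      · intro j hj
        have hja : j ≠ a := fun h => hj (h ▸ ha)
        have hjb : j ≠ b := fun h => hj (h ▸ hb)
        rw [Equiv.Perm.mul_apply, Equiv.swap_apply_of_ne_of_ne hja hjb]
        exact hq1 j hj
      · rw [map_mul, hq2, Equiv.Perm.sign_swap hab]
        decide
    · intro q hq
      simp only [Finset.mem_filter, hS, Finset.mem_univ, true_and] at hq ⊢
      obtain ⟨hq1, hq2⟩ := hq
      constructor
      · intro j hj
        have hja : j ≠ a := fun h => hj (h ▸ ha)
        have hjb : j ≠ b := fun h => hj (h ▸ hb)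
        rw [Equiv.Perm.mul_apply, Equiv.swap_apply_of_ne_of_ne hja hjb]
        exact hq1 j hj
      · rcases Int.units_eq_one_or (Equiv.Perm.sign q) with hs | hs
        · exact absurd hs hq2
        · rw [map_mul, hs, Equiv.Perm.sign_swap hab]; decide
    · intro q _
      rw [mul_assoc, Equiv.swap_mul_self, mul_one]
    · intro q _
      rw [mul_assoc, Equiv.swap_mul_self, mul_one]
  have hsplit := Finset.card_filter_add_card_filter_not
    (s := S) (p := fun p => Equiv.Perm.sign p = 1)
  have hfe : Finset.univ.filter
      (fun p : Equiv.Perm (Fin n) => Equiv.Perm.sign p = 1 ∧ ∀ j ∉ A, p j = d j)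
      = S.filter (fun p => Equiv.Perm.sign p = 1) := by
    rw [hS, Finset.filter_filter]
    apply Finset.filter_congr
    intro p _
    tauto
  rw [hfe]
  omega

/-- vertex-level version -/
lemma two_mul_card_even_extension_V (A : Finset (Fin n)) (d : Fin n → Fin n)
    (p₀ : Equiv.Perm (Fin n)) (hp₀ : ∀ j ∉ A, p₀ j = d j)
    {a b : Fin n} (ha : a ∈ A) (hb : b ∈ A) (hab : a ≠ b) :
    2 * (Finset.univ.filter (fun p : ANVertex n => ∀ j ∉ A, p.1 j = d j)).card = Nat.factorial A.card := by
  classical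
  rw [← two_mul_card_even_extension A d p₀ hp₀ ha hb hab]
  congr 1
  apply Finset.card_bij (fun (p : ANVertex n) _ => p.1)
  · intro p hp
    simp only [Finset.mem_filter, Finset.mem_univ, true_and] at hp ⊢
    exact ⟨p.2, hp⟩
  · intro p hp q hq h
    exact Subtype.ext h
  · intro q hq
    simp only [Finset.mem_filter, Finset.mem_univ, true_and] at hq
    exact ⟨⟨q, hq.1⟩, by simpa using hq.2, rfl⟩


lemma card_filter_lt (m : ℕ) (hmn : m ≤ n) :
    (Finset.univ.filter (fun j : Fin n => (j : ℕ) < m)).card = m := by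
  classical
  rcases Nat.eq_zero_or_pos m with rfl | hm
  · simp
  conv_rhs => rw [← Fintype.card_fin m, ← Finset.card_univ]
  refine Finset.card_nbij' (fun j => ((⟨(j : ℕ) % m, Nat.mod_lt _ hm⟩ : Fin m)))
    (fun k => (⟨(k : ℕ), lt_of_lt_of_le k.2 hmn⟩ : Fin n)) ?_ ?_ ?_ ?_
  · intro x hx; simp
  · intro k hk
    simp only [Finset.mem_coe, Finset.mem_filter, Finset.mem_univ, true_and]
    exact k.2
  · intro x hx
    simp only [Finset.mem_coe, Finset.mem_filter, Finset.mem_univ, true_and] at hx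
    simp [Nat.mod_eq_of_lt hx]
  · intro k hk
    simp [Nat.mod_eq_of_lt k.2]

lemma card_filter_ge (m : ℕ) (hmn : m ≤ n) :
    (Finset.univ.filter (fun j : Fin n => m ≤ (j : ℕ))).card = n - m := by
  classical
  have h := Finset.card_filter_add_card_filter_not
    (s := (Finset.univ : Finset (Fin n))) (p := fun j : Fin n => (j : ℕ) < m)
  simp only [not_lt] at h
  have h2 := card_filter_lt (n := n) m hmn
  have h3 : (Finset.univ : Finset (Fin n)).card = n := by simp
  omega


lemma mem_block_upd_iff {m : ℕ} (hm3 : 3 ≤ m) (hmn : m < n) (s : Fin n → Fin n) (k : Fin n)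
    (p : ANVertex n) :
    p ∈ blockSet n m (Function.update s ⟨m, hmn⟩ k) ↔
      p ∈ blockSet n (m + 1) s ∧ p.1 ⟨m, hmn⟩ = k := by
  constructor
  · intro h
    refine ⟨?_, ?_⟩
    · intro j hj
      have hje : j ≠ ⟨m, hmn⟩ := by
        intro he
        have := congrArg Fin.val he
        simp only [Fin.val_mk] at this
        omega
      have := h j (by omega)
      rwa [Function.update_of_ne hje] at this
    · have := h ⟨m, hmn⟩ (by simp)
      rwa [Function.update_self] at this
  · rintro ⟨h1, h2⟩ j hj
    by_cases hje : j = ⟨m, hmn⟩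
    · rw [hje, Function.update_self]; exact h2
    · have hj1 : m + 1 ≤ (j : ℕ) := by
        rcases Nat.lt_or_ge (j : ℕ) (m+1) with h | h
        · exfalso; apply hje; apply Fin.ext; simp only [Fin.val_mk]; omega
        · exact h
      rw [Function.update_of_ne hje]
      exact h1 j hj1

lemma crossV_mem_block {m : ℕ} (hm3 : 3 ≤ m) (hmn : m < n) (s : Fin n → Fin n) (k : Fin n)
    (p : ANVertex n) (hp : p ∈ blockSet n m (Function.update s ⟨m, hmn⟩ k)) :
    crossV (by omega) ⟨m, hmn⟩ hm3 p
      ∈ blockSet n m (Function.update s ⟨m, hmn⟩ (p.1 ⟨2, by omega⟩)) ∧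
    (crossV (by omega) ⟨m, hmn⟩ hm3 p).1 ⟨2, by omega⟩ = k := by
  have h3n : 3 ≤ n := by omega
  constructor
  · intro j hj
    by_cases hje : j = ⟨m, hmn⟩
    · rw [hje, Function.update_self, crossV_applyi]
    · have hj3 : 3 ≤ (j : ℕ) := by omega
      rw [crossV_apply_other _ _ _ _ _ hj3 hje, Function.update_of_ne hje]
      have := hp j hj
      rwa [Function.update_of_ne hje] at this
  · rw [crossV_apply2]
    have := hp ⟨m, hmn⟩ (by simp)
    rwa [Function.update_self] at this

lemma cross_pair_count {m : ℕ} (hm3 : 3 ≤ m) (hmn : m < n) (s : Fin n → Fin n)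
    (hs : ∀ j j' : Fin n, m + 1 ≤ (j:ℕ) → m + 1 ≤ (j':ℕ) → s j = s j' → j = j')
    (k l : Fin n) (hk : ∀ j : Fin n, m + 1 ≤ (j:ℕ) → s j ≠ k)
    (hl : ∀ j : Fin n, m + 1 ≤ (j:ℕ) → s j ≠ l) (hkl : k ≠ l) :
    2 * (Finset.univ.filter (fun p : ANVertex n =>
        (∀ j : Fin n, m ≤ (j:ℕ) → p.1 j = Function.update s ⟨m, hmn⟩ k j)
          ∧ p.1 ⟨2, by omega⟩ = l)).card
      = Nat.factorial (m - 1) := by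
  have h3n : 3 ≤ n := by omega
  set A : Finset (Fin n) := Finset.univ.filter (fun j : Fin n => (j:ℕ) < m ∧ (j:ℕ) ≠ 2)
    with hA
  have hnotA : ∀ j : Fin n, j ∉ A ↔ ((j:ℕ) = 2 ∨ m ≤ (j:ℕ)) := by
    intro j
    simp only [hA, Finset.mem_filter, Finset.mem_univ, true_and, not_and]
    constructor
    · intro h
      by_cases hlt : (j:ℕ) < m
      · have := h hlt
        omega
      · exact Or.inr (by omega)
    · intro h hlt
      omega
  set d : Fin n → Fin n := fun j => if (j:ℕ) = 2 then l else Function.update s ⟨m, hmn⟩ k j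
    with hd
  have dval2 : ∀ x : Fin n, (x:ℕ) = 2 → d x = l := by
    intro x hx; rw [hd]; simp only [if_pos hx]
  have dvalpm : d ⟨m, hmn⟩ = k := by
    rw [hd]; simp only [Fin.val_mk]
    rw [if_neg (by omega), Function.update_self]
  have dvalhi : ∀ x : Fin n, m + 1 ≤ (x:ℕ) → d x = s x := by
    intro x hx
    have hxm : x ≠ ⟨m, hmn⟩ := by
      intro h; have := congrArg Fin.val h; simp only [Fin.val_mk] at this; omega
    rw [hd]; simp only
    rw [if_neg (by omega), Function.update_of_ne hxm]
  have hge : ∀ x : Fin n, m ≤ (x:ℕ) → x ≠ ⟨m, hmn⟩ → m + 1 ≤ (x:ℕ) := by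
    intro x hx hxm
    rcases Nat.lt_or_ge (x:ℕ) (m+1) with h | h
    · exfalso; exact hxm (Fin.ext (by simp only [Fin.val_mk]; omega))
    · exact h
  have hAcard : A.card = m - 1 := by
    have h2m : (⟨2, by omega⟩ : Fin n) ∈ Finset.univ.filter (fun j : Fin n => (j:ℕ) < m) := by
      simp only [Finset.mem_filter, Finset.mem_univ, true_and, Fin.val_mk]
      omega
    have h1 : A = (Finset.univ.filter (fun j : Fin n => (j:ℕ) < m)).erase ⟨2, by omega⟩ := by
      ext j
      simp only [hA, Finset.mem_filter, Finset.mem_univ, true_and, Finset.mem_erase,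
        Ne, Fin.ext_iff, Fin.val_mk]
      tauto
    rw [h1, Finset.card_erase_of_mem h2m, card_filter_lt m (le_of_lt hmn)]
  have hinjd : ∀ j ∉ A, ∀ j' ∉ A, d j = d j' → j = j' := by
    intro j hj j' hj' heq
    rw [hnotA] at hj hj'
    -- reduce to a case analysis
    rcases hj with hj2 | hjm <;> rcases hj' with hj2' | hjm'
    · exact Fin.ext (by omega)
    · exfalso
      rw [dval2 j hj2] at heq
      by_cases h' : j' = ⟨m, hmn⟩
      · rw [h', dvalpm] at heq; exact hkl heq.symm
      · rw [dvalhi j' (hge j' hjm' h')] at heq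
        exact hl j' (hge j' hjm' h') heq.symm
    · exfalso
      rw [dval2 j' hj2'] at heq
      by_cases h' : j = ⟨m, hmn⟩
      · rw [h', dvalpm] at heq; exact hkl heq
      · rw [dvalhi j (hge j hjm h')] at heq
        exact hl j (hge j hjm h') heq
    · by_cases h1 : j = ⟨m, hmn⟩ <;> by_cases h2 : j' = ⟨m, hmn⟩
      · rw [h1, h2]
      · exfalso
        rw [h1, dvalpm, dvalhi j' (hge j' hjm' h2)] at heq
        exact hk j' (hge j' hjm' h2) heq.symm
      · exfalso
        rw [h2, dvalpm, dvalhi j (hge j hjm h1)] at heq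
        exact hk j (hge j hjm h1) heq
      · rw [dvalhi j (hge j hjm h1), dvalhi j' (hge j' hjm' h2)] at heq
        exact hs j j' (hge j hjm h1) (hge j' hjm' h2) heq
  have hiff : ∀ p : ANVertex n, (∀ j ∉ A, p.1 j = d j) ↔
      ((∀ j : Fin n, m ≤ (j:ℕ) → p.1 j = Function.update s ⟨m, hmn⟩ k j)
        ∧ p.1 ⟨2, by omega⟩ = l) := by
    intro p
    constructor
    · intro h
      constructor
      · intro j hj
        have hjA : j ∉ A := (hnotA j).mpr (Or.inr hj)
        have := h j hjA
        rw [this, hd]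
        simp only [if_neg (by omega : ¬ (j:ℕ) = 2)]
      · have h2A : (⟨2, by omega⟩ : Fin n) ∉ A := (hnotA _).mpr (Or.inl rfl)
        rw [h _ h2A, dval2 ⟨2, by omega⟩ rfl]
    · rintro ⟨hb, h2⟩ j hj
      rcases (hnotA j).mp hj with hj2 | hjm
      · have : j = (⟨2, by omega⟩ : Fin n) := Fin.ext (by simp only [Fin.val_mk]; omega)
        rw [this, dval2 ⟨2, by omega⟩ rfl]
        exact h2
      · rw [hd]
        simp only [if_neg (by omega : ¬ (j:ℕ) = 2)]
        exact hb j hjm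
  obtain ⟨p₀, hp₀⟩ := exists_extension A d hinjd
  have h0A : (⟨0, by omega⟩ : Fin n) ∈ A := by
    simp only [hA, Finset.mem_filter, Finset.mem_univ, true_and, Fin.val_mk]
    omega
  have h1A : (⟨1, by omega⟩ : Fin n) ∈ A := by
    simp only [hA, Finset.mem_filter, Finset.mem_univ, true_and, Fin.val_mk]
    omega
  have h01 : (⟨0, by omega⟩ : Fin n) ≠ ⟨1, by omega⟩ := by
    simp [Fin.ext_iff]
  have hcount := two_mul_card_even_extension_V A d p₀ hp₀ h0A h1A h01
  have hfe : Finset.univ.filter (fun p : ANVertex n => ∀ j ∉ A, p.1 j = d j)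
      = Finset.univ.filter (fun p : ANVertex n =>
          (∀ j : Fin n, m ≤ (j:ℕ) → p.1 j = Function.update s ⟨m, hmn⟩ k j)
            ∧ p.1 ⟨2, by omega⟩ = l) :=
    Finset.filter_congr (fun p _ => hiff p)
  rw [hfe, hAcard] at hcount
  exact hcount

lemma cross_pair_exists {m : ℕ} (hm3 : 3 ≤ m) (hmn : m < n) (s : Fin n → Fin n)
    (hs : ∀ j j' : Fin n, m + 1 ≤ (j:ℕ) → m + 1 ≤ (j':ℕ) → s j = s j' → j = j')
    (k l : Fin n) (hk : ∀ j : Fin n, m + 1 ≤ (j:ℕ) → s j ≠ k)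
    (hl : ∀ j : Fin n, m + 1 ≤ (j:ℕ) → s j ≠ l) (hkl : k ≠ l) :
    ∃ p : ANVertex n,
      p ∈ blockSet n m (Function.update s ⟨m, hmn⟩ k) ∧ p.1 ⟨2, by omega⟩ = l := by
  have h := cross_pair_count hm3 hmn s hs k l hk hl hkl
  have hpos := Nat.factorial_pos (m - 1)
  have : 0 < (Finset.univ.filter (fun p : ANVertex n =>
      (∀ j : Fin n, m ≤ (j:ℕ) → p.1 j = Function.update s ⟨m, hmn⟩ k j)
        ∧ p.1 ⟨2, by omega⟩ = l)).card := by
    omega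
  obtain ⟨p, hp⟩ := Finset.card_pos.mp this
  simp only [Finset.mem_filter, Finset.mem_univ, true_and] at hp
  exact ⟨p, hp⟩


/-- Reachability statement for blocks of level `m` with at most `m-2` faults. -/
def QStmt (n m : ℕ) : Prop :=
  ∀ (_ : m ≤ n) (s : Fin n → Fin n),
    (∀ j j' : Fin n, m ≤ (j:ℕ) → m ≤ (j':ℕ) → s j = s j' → j = j') →
    ∀ F : Finset (ANVertex n), (∀ f ∈ F, f ∈ blockSet n m s) → F.card + 2 ≤ m →
    ∀ u v : ANVertex n, ∀ (hu : u ∈ blockSet n m s \ ↑F) (hv : v ∈ blockSet n m s \ ↑F),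
    ((AN n).induce (blockSet n m s \ ↑F)).Reachable ⟨u, hu⟩ ⟨v, hv⟩

lemma valid_of_block {m : ℕ} (hmn : m < n) (s : Fin n → Fin n)
    (u : ANVertex n) (hu : u ∈ blockSet n (m+1) s) :
    ∀ j : Fin n, m + 1 ≤ (j:ℕ) → s j ≠ u.1 ⟨m, hmn⟩ := by
  intro j hj heq
  have h1 : u.1 j = s j := hu j hj
  have h2 : j = ⟨m, hmn⟩ := u.1.injective (by rw [h1, heq])
  have := congrArg Fin.val h2
  simp only [Fin.val_mk] at this
  omega

lemma upd_inj {m : ℕ} (hmn : m < n) (s : Fin n → Fin n)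
    (hs : ∀ j j' : Fin n, m + 1 ≤ (j:ℕ) → m + 1 ≤ (j':ℕ) → s j = s j' → j = j')
    (k : Fin n) (hk : ∀ j : Fin n, m + 1 ≤ (j:ℕ) → s j ≠ k) :
    ∀ j j' : Fin n, m ≤ (j:ℕ) → m ≤ (j':ℕ) →
      Function.update s ⟨m, hmn⟩ k j = Function.update s ⟨m, hmn⟩ k j' → j = j' := by
  intro j j' hj hj' he
  have hge : ∀ x : Fin n, m ≤ (x:ℕ) → x ≠ ⟨m, hmn⟩ → m + 1 ≤ (x:ℕ) := by
    intro x hx hxm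
    rcases Nat.lt_or_ge (x:ℕ) (m+1) with h | h
    · exfalso; exact hxm (Fin.ext (by simp only [Fin.val_mk]; omega))
    · exact h
  by_cases h1 : j = ⟨m, hmn⟩ <;> by_cases h2 : j' = ⟨m, hmn⟩
  · rw [h1, h2]
  · exfalso
    rw [h1, Function.update_self, Function.update_of_ne h2] at he
    exact hk j' (hge j' hj' h2) he.symm
  · exfalso
    rw [h2, Function.update_self, Function.update_of_ne h1] at he
    exact hk j (hge j hj h1) he
  · rw [Function.update_of_ne h1, Function.update_of_ne h2] at he
    exact hs j j' (hge j hj h1) (hge j' hj' h2) he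

lemma intra_reach {m : ℕ} (hm3 : 3 ≤ m) (hmn : m < n)
    (IH : QStmt n m) (s : Fin n → Fin n)
    (hs : ∀ j j' : Fin n, m + 1 ≤ (j:ℕ) → m + 1 ≤ (j':ℕ) → s j = s j' → j = j')
    (F : Finset (ANVertex n)) (hF : ∀ f ∈ F, f ∈ blockSet n (m+1) s)
    (k : Fin n)
    (hfk : (F.filter (fun f => f.1 ⟨m, hmn⟩ = k)).card + 2 ≤ m)
    (u v : ANVertex n)
    (hu : u ∈ blockSet n (m+1) s \ ↑F) (hv : v ∈ blockSet n (m+1) s \ ↑F)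
    (hku : u.1 ⟨m, hmn⟩ = k) (hkv : v.1 ⟨m, hmn⟩ = k) :
    ((AN n).induce (blockSet n (m+1) s \ ↑F)).Reachable ⟨u, hu⟩ ⟨v, hv⟩ := by
  have hkval : ∀ j : Fin n, m + 1 ≤ (j:ℕ) → s j ≠ k := by
    have := valid_of_block hmn s u hu.1
    rwa [hku] at this
  have hs' := upd_inj hmn s hs k hkval
  set s' := Function.update s ⟨m, hmn⟩ k with hs'def
  set F' := F.filter (fun f => f.1 ⟨m, hmn⟩ = k) with hF'def
  have hF' : ∀ f ∈ F', f ∈ blockSet n m s' := by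
    intro f hf
    rw [hF'def, Finset.mem_filter] at hf
    exact (mem_block_upd_iff hm3 hmn s k f).mpr ⟨hF f hf.1, hf.2⟩
  have hmemdiff : ∀ x : ANVertex n, x ∈ blockSet n (m+1) s \ ↑F → x.1 ⟨m, hmn⟩ = k →
      x ∈ blockSet n m s' \ ↑F' := by
    intro x hx hxk
    refine ⟨(mem_block_upd_iff hm3 hmn s k x).mpr ⟨hx.1, hxk⟩, ?_⟩
    intro hxF'
    exact hx.2 (Finset.mem_coe.mpr (Finset.mem_of_mem_filter x (Finset.mem_coe.mp hxF')))
  have hu' := hmemdiff u hu hku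
  have hv' := hmemdiff v hv hkv
  have h := IH (le_of_lt hmn) s' hs' F' hF' (by omega) u v hu' hv'
  have hST : blockSet n m s' \ ↑F' ⊆ blockSet n (m+1) s \ ↑F := by
    intro p hp
    have hb := (mem_block_upd_iff hm3 hmn s k p).mp hp.1
    refine ⟨hb.1, ?_⟩
    intro hpF
    exact hp.2 (Finset.mem_coe.mpr
      (Finset.mem_filter.mpr ⟨Finset.mem_coe.mp hpF, hb.2⟩))
  exact reach_mono hST hu' hv' h

lemma cross_edge_reach {m : ℕ} (hm3 : 3 ≤ m) (hmn : m < n)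
    (IH : QStmt n m) (s : Fin n → Fin n)
    (hs : ∀ j j' : Fin n, m + 1 ≤ (j:ℕ) → m + 1 ≤ (j':ℕ) → s j = s j' → j = j')
    (F : Finset (ANVertex n)) (hF : ∀ f ∈ F, f ∈ blockSet n (m+1) s)
    (k' l' : Fin n)
    (hfk : (F.filter (fun f => f.1 ⟨m, hmn⟩ = k')).card + 2 ≤ m)
    (hfl : (F.filter (fun f => f.1 ⟨m, hmn⟩ = l')).card + 2 ≤ m)
    (p : ANVertex n) (hp : p ∈ blockSet n m (Function.update s ⟨m, hmn⟩ k'))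
    (hp2 : p.1 ⟨2, by omega⟩ = l') (hpF : p ∉ F)
    (hqF : crossV (by omega) ⟨m, hmn⟩ hm3 p ∉ F)
    (x y : ANVertex n)
    (hx : x ∈ blockSet n (m+1) s \ ↑F) (hy : y ∈ blockSet n (m+1) s \ ↑F)
    (hxk : x.1 ⟨m, hmn⟩ = k') (hyl : y.1 ⟨m, hmn⟩ = l') :
    ((AN n).induce (blockSet n (m+1) s \ ↑F)).Reachable ⟨x, hx⟩ ⟨y, hy⟩ := by
  set q := crossV (by omega : (3:ℕ) ≤ n) ⟨m, hmn⟩ hm3 p with hqdef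
  obtain ⟨hqb0, hqe2⟩ := crossV_mem_block hm3 hmn s k' p hp
  rw [hp2] at hqb0
  have hpb := (mem_block_upd_iff hm3 hmn s k' p).mp hp
  have hqb := (mem_block_upd_iff hm3 hmn s l' q).mp hqb0
  have hpdiff : p ∈ blockSet n (m+1) s \ ↑F := ⟨hpb.1, fun h => hpF (Finset.mem_coe.mp h)⟩
  have hqdiff : q ∈ blockSet n (m+1) s \ ↑F := ⟨hqb.1, fun h => hqF (Finset.mem_coe.mp h)⟩
  have r1 : ((AN n).induce (blockSet n (m+1) s \ ↑F)).Reachable ⟨x, hx⟩ ⟨p, hpdiff⟩ :=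
    intra_reach hm3 hmn IH s hs F hF k' hfk x p hx hpdiff hxk hpb.2
  have r3 : ((AN n).induce (blockSet n (m+1) s \ ↑F)).Reachable ⟨q, hqdiff⟩ ⟨y, hy⟩ :=
    intra_reach hm3 hmn IH s hs F hF l' hfl q y hqdiff hy hqb.2 hyl
  have r2 : ((AN n).induce (blockSet n (m+1) s \ ↑F)).Adj ⟨p, hpdiff⟩ ⟨q, hqdiff⟩ :=
    adj_crossV (by omega) ⟨m, hmn⟩ hm3 p
  exact (r1.trans r2.reachable).trans r3


lemma dead_fault {m : ℕ} (hm3 : 3 ≤ m) (hmn : m < n) (s : Fin n → Fin n)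
    (hs : ∀ j j' : Fin n, m + 1 ≤ (j:ℕ) → m + 1 ≤ (j':ℕ) → s j = s j' → j = j')
    (F : Finset (ANVertex n)) (k l : Fin n)
    (hk : ∀ j : Fin n, m + 1 ≤ (j:ℕ) → s j ≠ k)
    (hl : ∀ j : Fin n, m + 1 ≤ (j:ℕ) → s j ≠ l) (hkl : k ≠ l)
    (hdead : ¬ ∃ p : ANVertex n, p ∈ blockSet n m (Function.update s ⟨m, hmn⟩ k) ∧
      p.1 ⟨2, by omega⟩ = l ∧ p ∉ F ∧ crossV (by omega) ⟨m, hmn⟩ hm3 p ∉ F) :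
    ∃ f ∈ F, (f.1 ⟨m, hmn⟩ = k ∧ f.1 ⟨2, by omega⟩ = l) ∨
      (f.1 ⟨m, hmn⟩ = l ∧ f.1 ⟨2, by omega⟩ = k) := by
  obtain ⟨p, hpb, hp2⟩ := cross_pair_exists hm3 hmn s hs k l hk hl hkl
  by_cases hpF : p ∈ F
  · exact ⟨p, hpF, Or.inl ⟨((mem_block_upd_iff hm3 hmn s k p).mp hpb).2, hp2⟩⟩
  by_cases hqF : crossV (by omega) ⟨m, hmn⟩ hm3 p ∈ F
  · obtain ⟨hqb0, hqe2⟩ := crossV_mem_block hm3 hmn s k p hpb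
    rw [hp2] at hqb0
    exact ⟨_, hqF, Or.inr ⟨((mem_block_upd_iff hm3 hmn s l _).mp hqb0).2, hqe2⟩⟩
  exact absurd ⟨p, hpb, hp2, hpF, hqF⟩ hdead

lemma four_mul_lt_fact : ∀ t : ℕ, 4 * (t + 3) < Nat.factorial (t + 4) := by
  intro t
  induction t with
  | zero => norm_num [Nat.factorial]
  | succ t ih =>
    have h1 : Nat.factorial (t + 1 + 4) = (t + 5) * Nat.factorial (t + 4) := rfl
    have h2 : 1 ≤ Nat.factorial (t + 4) := Nat.one_le_iff_ne_zero.mpr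
      (Nat.factorial_ne_zero _)
    nlinarith [ih, h2]


set_option maxHeartbeats 1600000 in
lemma Qlem (h3n : 3 ≤ n) : ∀ m, 3 ≤ m → QStmt n m := by
  intro m hm
  induction m, hm using Nat.le_induction with
  | base =>
    intro hmn s hs F hF hcard u v hu hv
    rcases eq_or_ne u v with rfl | hne
    · exact SimpleGraph.Reachable.refl _
    · exact SimpleGraph.Adj.reachable (by exact adj_of_block3 h3n hu.1 hv.1 hne)
  | succ m hm IH =>
    intro hmn1 s hs F hF hcard u v hu hv
    have hmn : m < n := by omega
    by_cases hsplit : ∀ k : Fin n, (F.filter (fun f => f.1 ⟨m, hmn⟩ = k)).card + 2 ≤ m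
    · -- case (a): every subblock has few faults
      have hkval := valid_of_block hmn s u hu.1
      have hlval := valid_of_block hmn s v hv.1
      by_cases hkl : u.1 ⟨m, hmn⟩ = v.1 ⟨m, hmn⟩
      · exact intra_reach hm hmn IH s hs F hF _ (hsplit _) u v hu hv rfl hkl.symm
      by_cases hal : ∃ p : ANVertex n,
          p ∈ blockSet n m (Function.update s ⟨m, hmn⟩ (u.1 ⟨m, hmn⟩)) ∧
          p.1 ⟨2, by omega⟩ = v.1 ⟨m, hmn⟩ ∧ p ∉ F ∧ crossV (by omega) ⟨m, hmn⟩ hm p ∉ F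
      · obtain ⟨p, hp, hp2, hpF, hqF⟩ := hal
        exact cross_edge_reach hm hmn IH s hs F hF _ _ (hsplit _) (hsplit _) p hp hp2 hpF
          hqF u v hu hv rfl rfl
      -- search for a hub
      set k := u.1 ⟨m, hmn⟩ with hkdef
      set l := v.1 ⟨m, hmn⟩ with hldef
      set Hi : Finset (Fin n) := (Finset.univ.filter (fun j : Fin n => m + 1 ≤ (j:ℕ))).image s
        with hHidef
      set W : Finset (Fin n) := Hiᶜ \ {k, l} with hWdef
      have hWvalid : ∀ w ∈ W, ∀ j : Fin n, m + 1 ≤ (j:ℕ) → s j ≠ w := by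
        intro w hw j hj heq
        rw [hWdef, Finset.mem_sdiff, Finset.mem_compl] at hw
        exact hw.1 (Finset.mem_image.mpr ⟨j, by simp [hj]; omega, heq⟩)
      have hWne : ∀ w ∈ W, w ≠ k ∧ w ≠ l := by
        intro w hw
        rw [hWdef, Finset.mem_sdiff] at hw
        have := hw.2
        simp only [Finset.mem_insert, Finset.mem_singleton] at this
        tauto
      by_cases hhub : ∃ w ∈ W,
          (∃ p : ANVertex n, p ∈ blockSet n m (Function.update s ⟨m, hmn⟩ k) ∧
            p.1 ⟨2, by omega⟩ = w ∧ p ∉ F ∧ crossV (by omega) ⟨m, hmn⟩ hm p ∉ F) ∧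
          (∃ p : ANVertex n, p ∈ blockSet n m (Function.update s ⟨m, hmn⟩ w) ∧
            p.1 ⟨2, by omega⟩ = l ∧ p ∉ F ∧ crossV (by omega) ⟨m, hmn⟩ hm p ∉ F)
      · obtain ⟨w, hwW, ⟨p1, hp1, hp12, hp1F, hq1F⟩, ⟨p2, hp2b, hp22, hp2F, hq2F⟩⟩ := hhub
        have hp2blk := (mem_block_upd_iff hm hmn s w p2).mp hp2b
        have hp2diff : p2 ∈ blockSet n (m+1) s \ ↑F :=
          ⟨hp2blk.1, fun h => hp2F (Finset.mem_coe.mp h)⟩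
        have r1 := cross_edge_reach hm hmn IH s hs F hF k w (hsplit _) (hsplit _) p1 hp1
          hp12 hp1F hq1F u p2 hu hp2diff rfl hp2blk.2
        have r2 := cross_edge_reach hm hmn IH s hs F hF w l (hsplit _) (hsplit _) p2 hp2b
          hp22 hp2F hq2F p2 v hp2diff hv hp2blk.2 rfl
        exact r1.trans r2
      -- no hub: counting contradiction
      exfalso
      obtain ⟨f₀, hf₀F, hf₀p⟩ := dead_fault hm hmn s hs F k l hkval hlval hkl hal
      have hHicard : Hi.card = n - (m+1) := by
        rw [hHidef, Finset.card_image_of_injOn, card_filter_ge (m+1) (by omega)]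
        intro x hx y hy hxy
        simp only [Finset.coe_filter, Set.mem_setOf_eq, Finset.mem_univ, true_and] at hx hy
        exact hs x y hx hy hxy
      have hklHi : ({k, l} : Finset (Fin n)) ⊆ Hiᶜ := by
        intro x hx
        simp only [Finset.mem_insert, Finset.mem_singleton] at hx
        rw [Finset.mem_compl, hHidef]
        intro hmem
        obtain ⟨j, hj, hsj⟩ := Finset.mem_image.mp hmem
        simp only [Finset.mem_filter, Finset.mem_univ, true_and] at hj
        rcases hx with rfl | rfl
        · exact hkval j hj hsj
        · exact hlval j hj hsj
      have hWcard : W.card = m - 1 := by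
        rw [hWdef, Finset.card_sdiff_of_subset hklHi, Finset.card_compl, Finset.card_pair hkl,
          Fintype.card_fin, hHicard]
        omega
      -- every w in W yields a distinct fault different from f₀
      have hchoice : ∀ w ∈ W, ∃ f, f ∈ F.erase f₀ ∧
          ((f.1 ⟨m, hmn⟩ = k ∧ f.1 ⟨2, by omega⟩ = w) ∨
           (f.1 ⟨m, hmn⟩ = w ∧ f.1 ⟨2, by omega⟩ = k) ∨
           (f.1 ⟨m, hmn⟩ = w ∧ f.1 ⟨2, by omega⟩ = l) ∨
           (f.1 ⟨m, hmn⟩ = l ∧ f.1 ⟨2, by omega⟩ = w)) := by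
        intro w hw
        obtain ⟨hwk, hwl⟩ := hWne w hw
        have hwval := hWvalid w hw
        have hdead := not_and_or.mp (fun hab => hhub ⟨w, hw, hab⟩)
        have hget : ∃ f ∈ F, ((f.1 ⟨m, hmn⟩ = k ∧ f.1 ⟨2, by omega⟩ = w) ∨
           (f.1 ⟨m, hmn⟩ = w ∧ f.1 ⟨2, by omega⟩ = k) ∨
           (f.1 ⟨m, hmn⟩ = w ∧ f.1 ⟨2, by omega⟩ = l) ∨
           (f.1 ⟨m, hmn⟩ = l ∧ f.1 ⟨2, by omega⟩ = w)) := by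
          rcases hdead with hdead | hdead
          · obtain ⟨f, hfF, hfp⟩ := dead_fault hm hmn s hs F k w hkval hwval hwk.symm hdead
            exact ⟨f, hfF, by tauto⟩
          · obtain ⟨f, hfF, hfp⟩ := dead_fault hm hmn s hs F w l hwval hlval hwl hdead
            exact ⟨f, hfF, by tauto⟩
        obtain ⟨f, hfF, hfp⟩ := hget
        refine ⟨f, Finset.mem_erase.mpr ⟨?_, hfF⟩, hfp⟩
        intro hff₀
        subst hff₀
        rcases hf₀p with ⟨c1, c2⟩ | ⟨c1, c2⟩ <;>
          rcases hfp with ⟨d1, d2⟩ | ⟨d1, d2⟩ | ⟨d1, d2⟩ | ⟨d1, d2⟩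
        · exact hwl (d2.symm.trans c2)
        · exact hwk (d1.symm.trans c1)
        · exact hwk (d1.symm.trans c1)
        · exact hkl (d1.symm.trans c1).symm
        · exact hkl (d1.symm.trans c1)
        · exact hwl (d1.symm.trans c1)
        · exact hwl (d1.symm.trans c1)
        · exact hwk (d2.symm.trans c2)
      classical
      set g : Fin n → ANVertex n := fun w => if h : w ∈ W then (hchoice w h).choose else f₀
        with hgdef
      have hgmem : ∀ w ∈ W, g w ∈ F.erase f₀ := by
        intro w hw
        rw [hgdef]
        simp only [dif_pos hw]
        exact (hchoice w hw).choose_spec.1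
      have hgprop : ∀ w (hw : w ∈ W),
          ((g w).1 ⟨m, hmn⟩ = k ∧ (g w).1 ⟨2, by omega⟩ = w) ∨
          ((g w).1 ⟨m, hmn⟩ = w ∧ (g w).1 ⟨2, by omega⟩ = k) ∨
          ((g w).1 ⟨m, hmn⟩ = w ∧ (g w).1 ⟨2, by omega⟩ = l) ∨
          ((g w).1 ⟨m, hmn⟩ = l ∧ (g w).1 ⟨2, by omega⟩ = w) := by
        intro w hw
        rw [hgdef]
        simp only [dif_pos hw]
        exact (hchoice w hw).choose_spec.2
      have hinj : Set.InjOn g ↑W := by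
        intro w hw w' hw' heq
        rw [Finset.mem_coe] at hw hw'
        obtain ⟨hwk, hwl⟩ := hWne w hw
        obtain ⟨hw'k, hw'l⟩ := hWne w' hw'
        have hPw := hgprop w hw
        have hPw' := hgprop w' hw'
        rw [heq] at hPw
        rcases hPw with ⟨a1, a2⟩ | ⟨a1, a2⟩ | ⟨a1, a2⟩ | ⟨a1, a2⟩ <;>
          rcases hPw' with ⟨b1, b2⟩ | ⟨b1, b2⟩ | ⟨b1, b2⟩ | ⟨b1, b2⟩
        all_goals first
          | exact a2.symm.trans b2
          | exact a1.symm.trans b1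
          | exact absurd (a1.symm.trans b1) hkl
          | exact absurd (a1.symm.trans b1).symm hkl
          | exact absurd (a1.symm.trans b1).symm hw'k
          | exact absurd (a1.symm.trans b1) hwk
          | exact absurd (a1.symm.trans b1) hwl
          | exact absurd (a1.symm.trans b1).symm hw'l
          | exact absurd (a2.symm.trans b2) hkl
      have hle := Finset.card_le_card_of_injOn g hgmem hinj
      rw [hWcard, Finset.card_erase_of_mem hf₀F] at hle
      omega
    · -- case (b): all faults in one subblock
      push_neg at hsplit
      obtain ⟨c, hc⟩ := hsplit
      have hFc : F.filter (fun f => f.1 ⟨m, hmn⟩ = c) = F := by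
        apply Finset.eq_of_subset_of_card_le (Finset.filter_subset _ _)
        omega
      have hallc : ∀ f ∈ F, f.1 ⟨m, hmn⟩ = c := by
        intro f hf
        rw [← hFc] at hf
        exact (Finset.mem_filter.mp hf).2
      have hfilter0 : ∀ k : Fin n, k ≠ c →
          (F.filter (fun f => f.1 ⟨m, hmn⟩ = k)).card + 2 ≤ m := by
        intro k hk
        have hemp : F.filter (fun f => f.1 ⟨m, hmn⟩ = k) = ∅ := by
          apply Finset.filter_eq_empty_iff.mpr
          intro f hf heq
          exact hk (heq ▸ (hallc f hf) ▸ rfl)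
        rw [hemp]
        simp only [Finset.card_empty]
        omega
      have hescape : ∀ x : ANVertex n, ∀ hx : x ∈ blockSet n (m+1) s \ ↑F,
          ∃ x' : ANVertex n, ∃ hx' : x' ∈ blockSet n (m+1) s \ ↑F, x'.1 ⟨m, hmn⟩ ≠ c ∧
            ((AN n).induce (blockSet n (m+1) s \ ↑F)).Reachable ⟨x, hx⟩ ⟨x', hx'⟩ := by
        intro x hx
        by_cases hxc : x.1 ⟨m, hmn⟩ = c
        · set x' := crossV (by omega : (3:ℕ) ≤ n) ⟨m, hmn⟩ hm x with hx'def
          have hx'b : x' ∈ blockSet n (m+1) s := by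
            intro j hj
            have hj3 : 3 ≤ (j:ℕ) := by omega
            have hjm : j ≠ ⟨m, hmn⟩ := by
              intro h
              have := congrArg Fin.val h
              simp only [Fin.val_mk] at this
              omega
            rw [hx'def, crossV_apply_other _ _ _ _ _ hj3 hjm]
            exact hx.1 j hj
          have hblk : x'.1 ⟨m, hmn⟩ = x.1 ⟨2, by omega⟩ := crossV_applyi _ _ _ _
          have hne2 : x.1 ⟨2, by omega⟩ ≠ c := by
            rw [← hxc]
            intro h
            have := x.1.injective h
            have := congrArg Fin.val this
            simp only [Fin.val_mk] at this
            omega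
          have hx'F : x' ∉ F := by
            intro h
            exact hne2 (hblk ▸ hallc x' h)
          refine ⟨x', ⟨hx'b, fun h => hx'F (Finset.mem_coe.mp h)⟩, by rw [hblk]; exact hne2,
            SimpleGraph.Adj.reachable ?_⟩
          exact adj_crossV (by omega) ⟨m, hmn⟩ hm x
        · exact ⟨x, hx, hxc, SimpleGraph.Reachable.refl _⟩
      obtain ⟨u', hu', hu'c, ru⟩ := hescape u hu
      obtain ⟨v', hv', hv'c, rv⟩ := hescape v hv
      by_cases heq : u'.1 ⟨m, hmn⟩ = v'.1 ⟨m, hmn⟩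
      · exact ru.trans ((intra_reach hm hmn IH s hs F hF _ (hfilter0 _ hu'c) u' v' hu' hv'
          rfl heq.symm).trans rv.symm)
      · have hkval := valid_of_block hmn s u' hu'.1
        have hlval := valid_of_block hmn s v' hv'.1
        obtain ⟨p, hp, hp2⟩ := cross_pair_exists hm hmn s hs _ _ hkval hlval heq
        have hpblk := (mem_block_upd_iff hm hmn s _ p).mp hp
        have hpF : p ∉ F := by
          intro h
          exact hu'c (hpblk.2 ▸ hallc p h)
        obtain ⟨hqb0, hqe2⟩ := crossV_mem_block hm hmn s _ p hp
        rw [hp2] at hqb0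
        have hqblk := (mem_block_upd_iff hm hmn s _ _).mp hqb0
        have hqF : crossV (by omega) ⟨m, hmn⟩ hm p ∉ F := by
          intro h
          exact hv'c (hqblk.2 ▸ hallc _ h)
        exact ru.trans ((cross_edge_reach hm hmn IH s hs F hF _ _ (hfilter0 _ hu'c)
          (hfilter0 _ hv'c) p hp hp2 hpF hqF u' v' hu' hv' rfl rfl).trans rv.symm)

end AuxAN

/-- For `n ≥ 6`, if every subnetwork `AN_n^i` contains at most `n − 3` vertices of
`F`, then `AN_n − F` is connected. -/
theorem AN_balanced_faults_connected (n : ℕ) (hn : 6 ≤ n) (F : Finset (ANVertex n))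
    (hF : ∀ i : Fin n,
      (F.filter (fun x => x.1 ⟨n - 1, by omega⟩ = i)).card ≤ n - 3) :
    ((AN n).induce (↑F : Set (ANVertex n))ᶜ).Connected := by
  
  have h3n : 3 ≤ n := by omega
  have hmn : n - 1 < n := by omega
  have hm3 : 3 ≤ n - 1 := by omega
  set s : Fin n → Fin n := fun j => j with hsdef
  have hs : ∀ j j' : Fin n, n - 1 + 1 ≤ (j:ℕ) → n - 1 + 1 ≤ (j':ℕ) → s j = s j' → j = j' := by
    intro j j' hj _ _
    exfalso
    have := j.isLt
    omega
  have hFblock : ∀ f ∈ F, f ∈ blockSet n (n - 1 + 1) s := by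
    intro f _ j hj
    exfalso
    have := j.isLt
    omega
  have hset : blockSet n (n - 1 + 1) s \ ↑F = (↑F : Set (ANVertex n))ᶜ := by
    ext p
    simp only [Set.mem_diff, Set.mem_compl_iff, blockSet, Set.mem_setOf_eq, and_iff_right_iff_imp]
    intro _ j hj
    exfalso
    have := j.isLt
    omega
  have hfk : ∀ k : Fin n, (F.filter (fun f => f.1 ⟨n - 1, hmn⟩ = k)).card + 2 ≤ n - 1 := by
    intro k
    have h := hF k
    have h2 : (F.filter (fun x => x.1 ⟨n - 1, by omega⟩ = k)).card
        = (F.filter (fun f => f.1 ⟨n - 1, hmn⟩ = k)).card := rfl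
    omega
  have IH := Qlem h3n (n - 1) hm3
  -- every pair of clusters has a surviving cross edge
  have halive : ∀ k l : Fin n, k ≠ l → ∃ p : ANVertex n,
      p ∈ blockSet n (n - 1) (Function.update s ⟨n - 1, hmn⟩ k) ∧
      p.1 ⟨2, by omega⟩ = l ∧ p ∉ F ∧ crossV (by omega) ⟨n - 1, hmn⟩ hm3 p ∉ F := by
    intro k l hkl
    by_contra hdead
    set X : Finset (ANVertex n) := Finset.univ.filter (fun p : ANVertex n =>
        (∀ j : Fin n, n - 1 ≤ (j:ℕ) → p.1 j = Function.update s ⟨n - 1, hmn⟩ k j)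
          ∧ p.1 ⟨2, by omega⟩ = l) with hXdef
    have hXcount : 2 * X.card = Nat.factorial (n - 1 - 1) :=
      cross_pair_count hm3 hmn s hs k l (fun j hj => by have := j.isLt; omega)
        (fun j hj => by have := j.isLt; omega) hkl
    have hXblock : ∀ p ∈ X, p ∈ blockSet n (n - 1) (Function.update s ⟨n - 1, hmn⟩ k)
        ∧ p.1 ⟨2, by omega⟩ = l := by
      intro p hp
      rw [hXdef, Finset.mem_filter] at hp
      exact hp.2
    have hsub : X ⊆ X.filter (fun p => p ∈ F) ∪
        X.filter (fun p => crossV (by omega) ⟨n - 1, hmn⟩ hm3 p ∈ F) := by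
      intro p hp
      obtain ⟨hpb, hp2⟩ := hXblock p hp
      by_cases hpF : p ∈ F
      · exact Finset.mem_union_left _ (Finset.mem_filter.mpr ⟨hp, hpF⟩)
      by_cases hqF : crossV (by omega) ⟨n - 1, hmn⟩ hm3 p ∈ F
      · exact Finset.mem_union_right _ (Finset.mem_filter.mpr ⟨hp, hqF⟩)
      exact absurd ⟨p, hpb, hp2, hpF, hqF⟩ hdead
    have hc1 : (X.filter (fun p => p ∈ F)).card
        ≤ (F.filter (fun f => f.1 ⟨n - 1, hmn⟩ = k)).card := by
      apply Finset.card_le_card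
      intro p hp
      rw [Finset.mem_filter] at hp
      obtain ⟨hpb, _⟩ := hXblock p hp.1
      refine Finset.mem_filter.mpr ⟨hp.2, ?_⟩
      exact ((mem_block_upd_iff hm3 hmn s k p).mp hpb).2
    have hc2 : (X.filter (fun p => crossV (by omega) ⟨n - 1, hmn⟩ hm3 p ∈ F)).card
        ≤ (F.filter (fun f => f.1 ⟨n - 1, hmn⟩ = l)).card := by
      apply Finset.card_le_card_of_injOn (crossV (by omega) ⟨n - 1, hmn⟩ hm3)
      · intro p hp
        rw [Finset.mem_coe, Finset.mem_filter] at hp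
        obtain ⟨hpb, hp2⟩ := hXblock p hp.1
        obtain ⟨hqb0, _⟩ := crossV_mem_block hm3 hmn s k p hpb
        rw [hp2] at hqb0
        refine Finset.mem_filter.mpr ⟨hp.2, ?_⟩
        exact ((mem_block_upd_iff hm3 hmn s l _).mp hqb0).2
      · intro p _ q _ h
        exact crossV_injective _ _ _ h
    have hX2 : X.card ≤ (F.filter (fun f => f.1 ⟨n - 1, hmn⟩ = k)).card
        + (F.filter (fun f => f.1 ⟨n - 1, hmn⟩ = l)).card := by
      calc X.card ≤ (X.filter (fun p => p ∈ F) ∪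
          X.filter (fun p => crossV (by omega) ⟨n - 1, hmn⟩ hm3 p ∈ F)).card :=
            Finset.card_le_card hsub
        _ ≤ _ := le_trans (Finset.card_union_le _ _) (by omega)
    obtain ⟨t, rfl⟩ : ∃ t, n = t + 6 := ⟨n - 6, by omega⟩
    have hfact := four_mul_lt_fact t
    have hfacteq : Nat.factorial (t + 6 - 1 - 1) = Nat.factorial (t + 4) := rfl
    have hk' := hfk k
    have hl' := hfk l
    rw [hfacteq] at hXcount
    omega
  rw [← hset, SimpleGraph.connected_iff]
  constructor
  · rintro ⟨u, hu⟩ ⟨v, hv⟩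
    by_cases hkl : u.1 ⟨n - 1, hmn⟩ = v.1 ⟨n - 1, hmn⟩
    · exact intra_reach hm3 hmn IH s hs F hFblock _ (hfk _) u v hu hv rfl hkl.symm
    · obtain ⟨p, hp, hp2, hpF, hqF⟩ := halive _ _ hkl
      exact cross_edge_reach hm3 hmn IH s hs F hFblock _ _ (hfk _) (hfk _) p hp hp2 hpF hqF
        u v hu hv rfl rfl
  · obtain ⟨p, hp, _, hpF, _⟩ := halive ⟨0, by omega⟩ ⟨1, by omega⟩
      (by simp [Fin.ext_iff])
    have hpb := (mem_block_upd_iff hm3 hmn s _ p).mp hp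
    exact ⟨⟨p, ⟨hpb.1, fun h => hpF (Finset.mem_coe.mp h)⟩⟩⟩
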